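/- Let Λ_P be a Penrose model set and k ∈ ℕ. Then for every set U ⊂ S¹ of 1 + ⌊log₂ k⌋ pairwise non-parallel ℤ[ζ₅]-directions, the class 𝓕_{≤k}(Λ_P) of all finite subsets of Λ_P of cardinality at most k is not determined by the X-rays in the directions of U: there exist distinct sets F, F' ⊂ Λ_P with card(F) ≤ k, card(F') ≤ k, and X_uF = X_uF' for all u ∈ U. -/

import Mathlib

open scoped Pointwise

noncomputable section

instance : TopologicalSpace (ZMod 5) := ⊥
instance : DiscreteTopology (ZMod 5) := ⟨rfl⟩

/-- The primitive 5th root of unity ζ₅ = exp(2πi/5). -/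
def zeta5 : ℂ := Complex.exp (2 * Real.pi * Complex.I / 5)

/-- The ring of cyclotomic integers ℤ[ζ₅], as the set of ℤ-combinations of 1, ζ₅, ζ₅², ζ₅³. -/
def Zzeta5 : Set ℂ := {z | ∃ a : Fin 4 → ℤ, z = ∑ j : Fin 4, (a j : ℂ) * zeta5 ^ (j : ℕ)}

/-- The (unique) integer coefficients of an element of ℤ[ζ₅] w.r.t. the basis 1, ζ₅, ζ₅², ζ₅³. -/
def coeffs (z : ℂ) : Fin 4 → ℤ :=
  open Classical in
  if h : z ∈ Zzeta5 then h.choose else 0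

/-- The star map z ↦ (σ₂(z), Σ aⱼ(z) mod 5), with σ₂ the Galois automorphism ζ₅ ↦ ζ₅². -/
def starMap (z : ℂ) : ℂ × ZMod 5 :=
  (∑ j : Fin 4, (coeffs z j : ℂ) * zeta5 ^ (2 * (j : ℕ)),
   ∑ j : Fin 4, ((coeffs z j : ℤ) : ZMod 5))

/-- The regular pentagon P: the convex hull of the 5th roots of unity. -/
def pent : Set ℂ := convexHull ℝ {z : ℂ | z ^ 5 = 1}

/-- The golden ratio τ = (1+√5)/2. -/
def tauR : ℝ := (1 + Real.sqrt 5) / 2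

/-- The Penrose window W_P ⊂ ℝ² × ℤ/5ℤ. -/
def WP : Set (ℂ × ZMod 5) :=
  (pent ×ˢ ({1} : Set (ZMod 5))) ∪ ((-pent) ×ˢ ({2} : Set (ZMod 5))) ∪
    ((tauR • pent) ×ˢ ({3} : Set (ZMod 5))) ∪ ((-(tauR • pent)) ×ˢ ({4} : Set (ZMod 5)))

/-- The shifted window W_P^u = (u, 0) + W_P. -/
def WPu (u : ℂ) : Set (ℂ × ZMod 5) := (fun p => ((u, (0 : ZMod 5)) + p)) '' WP

/-- The model set Λ_P^u = {z ∈ ℤ[ζ₅] : z⋆ ∈ W_P^u}. -/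
def LambdaPu (u : ℂ) : Set ℂ := {z | z ∈ Zzeta5 ∧ starMap z ∈ WPu u}

/-- Λ_P^u is generic if the boundary of W_P^u contains no point of ℤ[ζ₅]⋆. -/
def IsGeneric (u : ℂ) : Prop := ∀ z ∈ Zzeta5, starMap z ∉ frontier (WPu u)

/-- A Penrose model set: a translate t + Λ_P^u of a generic Λ_P^u. -/
def IsPMS (Λ : Set ℂ) : Prop := ∃ t u : ℂ, IsGeneric u ∧ Λ = (fun z => t + z) '' LambdaPu u

/-- v is parallel to u. -/
def Par (u v : ℂ) : Prop := ∃ r : ℝ, r ≠ 0 ∧ v = r • u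

/-- A ℤ[ζ₅]-direction: a direction parallel to a nonzero element of ℤ[ζ₅]. -/
def IsZ5Direction (u : ℂ) : Prop := ∃ z ∈ Zzeta5, z ≠ 0 ∧ Par u z

/-- The line through p in direction u. -/
def line (u p : ℂ) : Set ℂ := {x | ∃ t : ℝ, x = p + t • u}

/-- The X-ray of F in direction u, as a function of the base point of the line. -/
def Xray (u : ℂ) (F : Set ℂ) : ℂ → ℕ := fun p => (F ∩ line u p).ncard

/-- A convex subset C of Λ: a finite subset with C = conv(C) ∩ Λ. -/
def IsConvexSubset (Λ C : Set ℂ) : Prop :=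
  C.Finite ∧ C ⊆ Λ ∧ C = convexHull ℝ C ∩ Λ

/-! ### Auxiliary development -/

open Finset Real

section Aux

/-! #### Basic facts about ζ₅ -/

lemma zeta5_prim : IsPrimitiveRoot zeta5 5 := by
  have := Complex.isPrimitiveRoot_exp 5 (by norm_num)
  simpa [zeta5] using this

lemma zeta5_pow_five : zeta5 ^ 5 = 1 := zeta5_prim.pow_eq_one

lemma zeta5_ne_one : zeta5 ≠ 1 := zeta5_prim.ne_one (by norm_num)

lemma zeta5_sum : 1 + zeta5 + zeta5 ^ 2 + zeta5 ^ 3 + zeta5 ^ 4 = 0 := by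
  have h : (zeta5 - 1) * (1 + zeta5 + zeta5 ^ 2 + zeta5 ^ 3 + zeta5 ^ 4) = zeta5 ^ 5 - 1 := by
    ring
  rw [zeta5_pow_five, sub_self] at h
  rcases mul_eq_zero.1 h with h1 | h2
  · exact absurd (sub_eq_zero.1 h1) zeta5_ne_one
  · exact h2

lemma minpoly_zeta5 : minpoly ℚ zeta5 = Polynomial.cyclotomic 5 ℚ := by
  refine (minpoly.eq_of_irreducible_of_monic
    (Polynomial.cyclotomic.irreducible_rat (by norm_num)) ?_
    (Polynomial.cyclotomic.monic 5 ℚ)).symm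
  have := zeta5_prim.isRoot_cyclotomic (by norm_num : 0 < 5)
  rw [Polynomial.IsRoot.def] at this
  rw [Polynomial.aeval_def, ← Polynomial.eval_map, Polynomial.map_cyclotomic]
  exact this

lemma coeff_unique {a b : Fin 4 → ℤ}
    (h : ∑ j : Fin 4, (a j : ℂ) * zeta5 ^ (j : ℕ) = ∑ j : Fin 4, (b j : ℂ) * zeta5 ^ (j : ℕ)) :
    a = b := by
  by_contra hne
  set p : Polynomial ℚ := ∑ j : Fin 4, Polynomial.C ((a j - b j : ℤ) : ℚ) * Polynomial.X ^ (j : ℕ) with hp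
  have hcoeff : ∀ j : Fin 4, p.coeff (j : ℕ) = ((a j - b j : ℤ) : ℚ) := by
    intro j
    rw [hp]
    rw [Polynomial.finset_sum_coeff]
    rw [Finset.sum_eq_single j]
    · rw [Polynomial.coeff_C_mul, Polynomial.coeff_X_pow, if_pos rfl, mul_one]
    · intro i _ hij
      rw [Polynomial.coeff_C_mul, Polynomial.coeff_X_pow]
      have : (j : ℕ) ≠ (i : ℕ) := fun hc => hij (Fin.ext hc.symm)
      rw [if_neg this, mul_zero]
    · intro hj; exact absurd (Finset.mem_univ j) hj
  have hpne : p ≠ 0 := by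
    intro hz
    apply hne
    funext j
    have h2 := hcoeff j
    rw [hz] at h2
    simp only [Polynomial.coeff_zero] at h2
    have : (a j - b j : ℤ) = 0 := by exact_mod_cast h2.symm
    omega
  have haev : Polynomial.aeval zeta5 p = 0 := by
    rw [hp]
    simp only [map_sum, Polynomial.aeval_mul, Polynomial.aeval_C, Polynomial.aeval_X_pow, map_pow]
    push_cast
    simp only [sub_mul]
    rw [Finset.sum_sub_distrib]
    rw [sub_eq_zero]
    convert h using 2 <;> simp [Polynomial.aeval_X]
  have hdeg := minpoly.degree_le_of_ne_zero ℚ zeta5 hpne haev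
  rw [minpoly_zeta5, Polynomial.degree_cyclotomic] at hdeg
  have : Nat.totient 5 = 4 := by decide
  rw [this] at hdeg
  have hdp : p.degree ≤ 3 := by
    apply Polynomial.degree_sum_le _ _ |>.trans
    apply Finset.sup_le
    intro j _
    refine (Polynomial.degree_C_mul_X_pow_le _ _).trans ?_
    exact_mod_cast Nat.cast_le.2 (by omega : (j:ℕ) ≤ 3)
  have := hdeg.trans hdp
  norm_num at this

lemma mem_of (a : Fin 4 → ℤ) : (∑ j : Fin 4, (a j : ℂ) * zeta5 ^ (j : ℕ)) ∈ Zzeta5 := ⟨a, rfl⟩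

lemma coeffs_spec {z : ℂ} (h : z ∈ Zzeta5) :
    z = ∑ j : Fin 4, (coeffs z j : ℂ) * zeta5 ^ (j : ℕ) := by
  rw [coeffs, dif_pos h]
  exact h.choose_spec

lemma coeffs_of (a : Fin 4 → ℤ) :
    coeffs (∑ j : Fin 4, (a j : ℂ) * zeta5 ^ (j : ℕ)) = a :=
  coeff_unique (coeffs_spec (mem_of a)).symm

/-! #### The two components of the star map -/

def sigma2 (z : ℂ) : ℂ := ∑ j : Fin 4, (coeffs z j : ℂ) * zeta5 ^ (2 * (j : ℕ))
def amod (z : ℂ) : ZMod 5 := ∑ j : Fin 4, ((coeffs z j : ℤ) : ZMod 5)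

lemma starMap_eq (z : ℂ) : starMap z = (sigma2 z, amod z) := rfl

lemma fv0 : ((0 : Fin 4) : ℕ) = 0 := rfl
lemma fv1 : ((1 : Fin 4) : ℕ) = 1 := rfl
lemma fv2 : ((2 : Fin 4) : ℕ) = 2 := rfl
lemma fv3 : ((3 : Fin 4) : ℕ) = 3 := rfl

lemma sigma2_of (a : Fin 4 → ℤ) :
    sigma2 (∑ j : Fin 4, (a j : ℂ) * zeta5 ^ (j : ℕ)) = ∑ j : Fin 4, (a j : ℂ) * zeta5 ^ (2 * (j : ℕ)) := by
  rw [sigma2, coeffs_of]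
lemma amod_of (a : Fin 4 → ℤ) :
    amod (∑ j : Fin 4, (a j : ℂ) * zeta5 ^ (j : ℕ)) = ∑ j : Fin 4, ((a j : ℤ) : ZMod 5) := by
  rw [amod, coeffs_of]

lemma add_rep (a b : Fin 4 → ℤ) :
    (∑ j : Fin 4, (a j : ℂ) * zeta5 ^ (j : ℕ)) + (∑ j : Fin 4, (b j : ℂ) * zeta5 ^ (j : ℕ))
      = ∑ j : Fin 4, ((a + b) j : ℂ) * zeta5 ^ (j : ℕ) := by
  rw [← Finset.sum_add_distrib]
  refine Finset.sum_congr rfl fun j _ => ?_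
  simp only [Pi.add_apply]; push_cast; ring

lemma smul_rep (n : ℤ) (a : Fin 4 → ℤ) :
    (n : ℂ) * (∑ j : Fin 4, (a j : ℂ) * zeta5 ^ (j : ℕ))
      = ∑ j : Fin 4, ((n • a) j : ℂ) * zeta5 ^ (j : ℕ) := by
  rw [Finset.mul_sum]
  refine Finset.sum_congr rfl fun j _ => ?_
  simp only [Pi.smul_apply, smul_eq_mul]; push_cast; ring

lemma mem_add {z w : ℂ} (hz : z ∈ Zzeta5) (hw : w ∈ Zzeta5) : z + w ∈ Zzeta5 := by
  obtain ⟨a, rfl⟩ := hz; obtain ⟨b, rfl⟩ := hw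
  exact (add_rep a b) ▸ mem_of _

lemma sigma2_add {z w : ℂ} (hz : z ∈ Zzeta5) (hw : w ∈ Zzeta5) :
    sigma2 (z + w) = sigma2 z + sigma2 w := by
  obtain ⟨a, rfl⟩ := hz; obtain ⟨b, rfl⟩ := hw
  rw [add_rep, sigma2_of, sigma2_of, sigma2_of, ← Finset.sum_add_distrib]
  refine Finset.sum_congr rfl fun j _ => ?_
  simp only [Pi.add_apply]; push_cast; ring

lemma amod_add {z w : ℂ} (hz : z ∈ Zzeta5) (hw : w ∈ Zzeta5) :
    amod (z + w) = amod z + amod w := by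
  obtain ⟨a, rfl⟩ := hz; obtain ⟨b, rfl⟩ := hw
  rw [add_rep, amod_of, amod_of, amod_of, ← Finset.sum_add_distrib]
  refine Finset.sum_congr rfl fun j _ => ?_
  simp only [Pi.add_apply]; push_cast; ring

lemma mem_zsmul {z : ℂ} (hz : z ∈ Zzeta5) (n : ℤ) : (n : ℂ) * z ∈ Zzeta5 := by
  obtain ⟨a, rfl⟩ := hz
  exact (smul_rep n a) ▸ mem_of _

lemma sigma2_zsmul {z : ℂ} (hz : z ∈ Zzeta5) (n : ℤ) : sigma2 ((n : ℂ) * z) = n * sigma2 z := by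
  obtain ⟨a, rfl⟩ := hz
  rw [smul_rep, sigma2_of, sigma2_of, Finset.mul_sum]
  refine Finset.sum_congr rfl fun j _ => ?_
  simp only [Pi.smul_apply, smul_eq_mul]; push_cast; ring

lemma amod_zsmul {z : ℂ} (hz : z ∈ Zzeta5) (n : ℤ) : amod ((n : ℂ) * z) = (n : ZMod 5) * amod z := by
  obtain ⟨a, rfl⟩ := hz
  rw [smul_rep, amod_of, amod_of, Finset.mul_sum]
  refine Finset.sum_congr rfl fun j _ => ?_
  simp only [Pi.smul_apply, smul_eq_mul]; push_cast; ring

def mono : ℕ → Fin 4 → ℤ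
  | 0 => ![1,0,0,0]
  | 1 => ![0,1,0,0]
  | 2 => ![0,0,1,0]
  | 3 => ![0,0,0,1]
  | 4 => ![-1,-1,-1,-1]
  | 5 => ![1,0,0,0]
  | 6 => ![0,1,0,0]
  | _ => 0

lemma zeta5_pow_eq (m : ℕ) (hm : m ≤ 6) :
    zeta5 ^ m = ∑ j : Fin 4, ((mono m j : ℤ) : ℂ) * zeta5 ^ (j : ℕ) := by
  interval_cases m <;>
    simp only [mono, Fin.sum_univ_four, fv0, fv1, fv2, fv3,
      Matrix.cons_val_zero, Matrix.cons_val_one, Matrix.head_cons, Matrix.cons_val] <;>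
    norm_num
  · linear_combination zeta5_sum
  · linear_combination zeta5_pow_five
  · linear_combination zeta5 * zeta5_pow_five

lemma mem_zeta_pow (m : ℕ) (hm : m ≤ 6) : zeta5 ^ m ∈ Zzeta5 := by
  rw [zeta5_pow_eq m hm]; exact mem_of _

lemma sigma2_zeta_pow (m : ℕ) (hm : m ≤ 6) : sigma2 (zeta5 ^ m) = zeta5 ^ (2 * m) := by
  rw [zeta5_pow_eq m hm, sigma2_of]
  interval_cases m <;>
    simp only [mono, Fin.sum_univ_four, fv0, fv1, fv2, fv3,
      Matrix.cons_val_zero, Matrix.cons_val_one, Matrix.head_cons, Matrix.cons_val] <;>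
    norm_num
  · linear_combination (-(zeta5^3) - zeta5) * zeta5_pow_five - zeta5_sum
  · linear_combination (-(zeta5^5) - 1) * zeta5_pow_five
  · linear_combination (-(zeta5^7) - zeta5^2) * zeta5_pow_five

lemma amod_zeta_pow (m : ℕ) (hm : m ≤ 6) : amod (zeta5 ^ m) = 1 := by
  rw [zeta5_pow_eq m hm, amod_of]
  interval_cases m <;>
    simp only [mono, Fin.sum_univ_four,
      Matrix.cons_val_zero, Matrix.cons_val_one, Matrix.head_cons] <;>
    decide

/-! #### Ring structure -/

lemma mem_zero : (0 : ℂ) ∈ Zzeta5 := ⟨0, by simp⟩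

lemma zero_rep : (0 : ℂ) = ∑ j : Fin 4, ((0 : Fin 4 → ℤ) j : ℂ) * zeta5 ^ (j : ℕ) := by simp

lemma sigma2_zero : sigma2 0 = 0 := by rw [zero_rep, sigma2_of]; simp

lemma amod_zero : amod 0 = 0 := by rw [zero_rep, amod_of]; simp

lemma mem_one : (1 : ℂ) ∈ Zzeta5 := by
  have := mem_zeta_pow 0 (by norm_num); simpa using this

lemma sigma2_one : sigma2 1 = 1 := by
  have := sigma2_zeta_pow 0 (by norm_num); simpa using this

lemma amod_one : amod 1 = 1 := by
  have := amod_zeta_pow 0 (by norm_num); simpa using this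

lemma mem_sum {ι : Type*} (s : Finset ι) (f : ι → ℂ) (hf : ∀ i ∈ s, f i ∈ Zzeta5) :
    (∑ i ∈ s, f i) ∈ Zzeta5 := by
  classical
  induction s using Finset.induction_on with
  | empty => simpa using mem_zero
  | insert _ _ hni ih =>
    rw [Finset.sum_insert hni]
    exact mem_add (hf _ (Finset.mem_insert_self _ _))
      (ih fun i hi => hf i (Finset.mem_insert_of_mem hi))

lemma sigma2_sum {ι : Type*} (s : Finset ι) (f : ι → ℂ) (hf : ∀ i ∈ s, f i ∈ Zzeta5) :
    sigma2 (∑ i ∈ s, f i) = ∑ i ∈ s, sigma2 (f i) := by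
  classical
  induction s using Finset.induction_on with
  | empty => simpa using sigma2_zero
  | insert _ _ hni ih =>
    rw [Finset.sum_insert hni, Finset.sum_insert hni,
      sigma2_add (hf _ (Finset.mem_insert_self _ _))
        (mem_sum _ _ fun i hi => hf i (Finset.mem_insert_of_mem hi)),
      ih fun i hi => hf i (Finset.mem_insert_of_mem hi)]

lemma amod_sum {ι : Type*} (s : Finset ι) (f : ι → ℂ) (hf : ∀ i ∈ s, f i ∈ Zzeta5) :
    amod (∑ i ∈ s, f i) = ∑ i ∈ s, amod (f i) := by
  classical
  induction s using Finset.induction_on with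
  | empty => simpa using amod_zero
  | insert _ _ hni ih =>
    rw [Finset.sum_insert hni, Finset.sum_insert hni,
      amod_add (hf _ (Finset.mem_insert_self _ _))
        (mem_sum _ _ fun i hi => hf i (Finset.mem_insert_of_mem hi)),
      ih fun i hi => hf i (Finset.mem_insert_of_mem hi)]

lemma expand_mul {z w : ℂ} (hz : z ∈ Zzeta5) (hw : w ∈ Zzeta5) :
    ∃ a b : Fin 4 → ℤ, z = ∑ j : Fin 4, (a j : ℂ) * zeta5 ^ (j : ℕ) ∧
      w = ∑ j : Fin 4, (b j : ℂ) * zeta5 ^ (j : ℕ) ∧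
      z * w = ∑ i : Fin 4, ∑ j : Fin 4, ((a i * b j : ℤ) : ℂ) * zeta5 ^ ((i : ℕ) + (j : ℕ)) := by
  obtain ⟨a, ha⟩ := hz
  obtain ⟨b, hb⟩ := hw
  refine ⟨a, b, ha, hb, ?_⟩
  rw [ha, hb, Finset.sum_mul_sum]
  refine Finset.sum_congr rfl fun i _ => Finset.sum_congr rfl fun j _ => ?_
  push_cast
  rw [pow_add]
  ring

lemma mem_mul {z w : ℂ} (hz : z ∈ Zzeta5) (hw : w ∈ Zzeta5) : z * w ∈ Zzeta5 := by
  obtain ⟨a, b, _, _, hzw⟩ := expand_mul hz hw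
  rw [hzw]
  refine mem_sum _ _ fun i _ => mem_sum _ _ fun j _ => ?_
  exact mem_zsmul (mem_zeta_pow _ (by omega)) _

lemma sigma2_mul {z w : ℂ} (hz : z ∈ Zzeta5) (hw : w ∈ Zzeta5) :
    sigma2 (z * w) = sigma2 z * sigma2 w := by
  obtain ⟨a, b, ha, hb, hzw⟩ := expand_mul hz hw
  have hmem : ∀ (i j : Fin 4), ((a i * b j : ℤ) : ℂ) * zeta5 ^ ((i : ℕ) + (j : ℕ)) ∈ Zzeta5 :=
    fun i j => mem_zsmul (mem_zeta_pow _ (by omega)) _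
  rw [hzw, sigma2_sum _ _ (fun i _ => mem_sum _ _ fun j _ => hmem i j)]
  have : ∀ i : Fin 4, sigma2 (∑ j : Fin 4, ((a i * b j : ℤ) : ℂ) * zeta5 ^ ((i : ℕ) + (j : ℕ)))
      = ∑ j : Fin 4, ((a i * b j : ℤ) : ℂ) * zeta5 ^ (2 * ((i : ℕ) + (j : ℕ))) := by
    intro i
    rw [sigma2_sum _ _ fun j _ => hmem i j]
    refine Finset.sum_congr rfl fun j _ => ?_
    rw [sigma2_zsmul (mem_zeta_pow _ (by omega)), sigma2_zeta_pow _ (by omega)]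
  rw [Finset.sum_congr rfl fun i _ => this i, ha, hb, sigma2_of, sigma2_of, Finset.sum_mul_sum]
  refine Finset.sum_congr rfl fun i _ => Finset.sum_congr rfl fun j _ => ?_
  push_cast
  rw [show 2 * ((i:ℕ) + (j:ℕ)) = 2*(i:ℕ) + 2*(j:ℕ) by ring, pow_add]
  ring

lemma amod_mul {z w : ℂ} (hz : z ∈ Zzeta5) (hw : w ∈ Zzeta5) :
    amod (z * w) = amod z * amod w := by
  obtain ⟨a, b, ha, hb, hzw⟩ := expand_mul hz hw
  have hmem : ∀ (i j : Fin 4), ((a i * b j : ℤ) : ℂ) * zeta5 ^ ((i : ℕ) + (j : ℕ)) ∈ Zzeta5 :=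
    fun i j => mem_zsmul (mem_zeta_pow _ (by omega)) _
  rw [hzw, amod_sum _ _ (fun i _ => mem_sum _ _ fun j _ => hmem i j)]
  have : ∀ i : Fin 4, amod (∑ j : Fin 4, ((a i * b j : ℤ) : ℂ) * zeta5 ^ ((i : ℕ) + (j : ℕ)))
      = ∑ j : Fin 4, ((a i : ZMod 5) * (b j : ZMod 5)) := by
    intro i
    rw [amod_sum _ _ fun j _ => hmem i j]
    refine Finset.sum_congr rfl fun j _ => ?_
    rw [amod_zsmul (mem_zeta_pow _ (by omega)), amod_zeta_pow _ (by omega)]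
    push_cast
    ring
  rw [Finset.sum_congr rfl fun i _ => this i, ha, hb, amod_of, amod_of, Finset.sum_mul_sum]

lemma mem_pow {z : ℂ} (hz : z ∈ Zzeta5) (n : ℕ) : z ^ n ∈ Zzeta5 := by
  induction n with
  | zero => simpa using mem_one
  | succ n ih => rw [pow_succ]; exact mem_mul ih hz

lemma sigma2_pow {z : ℂ} (hz : z ∈ Zzeta5) (n : ℕ) : sigma2 (z ^ n) = (sigma2 z) ^ n := by
  induction n with
  | zero => simpa using sigma2_one
  | succ n ih => rw [pow_succ, pow_succ, sigma2_mul (mem_pow hz n) hz, ih]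

lemma amod_pow {z : ℂ} (hz : z ∈ Zzeta5) (n : ℕ) : amod (z ^ n) = (amod z) ^ n := by
  induction n with
  | zero => simpa using amod_one
  | succ n ih => rw [pow_succ, pow_succ, amod_mul (mem_pow hz n) hz, ih]

lemma mem_int (n : ℤ) : ((n : ℤ) : ℂ) ∈ Zzeta5 := by
  simpa using mem_zsmul mem_one n

lemma sigma2_int (n : ℤ) : sigma2 ((n : ℤ) : ℂ) = n := by
  have := sigma2_zsmul mem_one n
  rw [mul_one, sigma2_one, mul_one] at this
  exact this

lemma amod_int (n : ℤ) : amod ((n : ℤ) : ℂ) = (n : ZMod 5) := by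
  have := amod_zsmul mem_one n
  rw [mul_one, amod_one, mul_one] at this
  exact this

lemma mem_sub {z w : ℂ} (hz : z ∈ Zzeta5) (hw : w ∈ Zzeta5) : z - w ∈ Zzeta5 := by
  have h : z - w = z + ((-1 : ℤ) : ℂ) * w := by push_cast; ring
  rw [h]
  exact mem_add hz (mem_zsmul hw (-1))

lemma sigma2_sub {z w : ℂ} (hz : z ∈ Zzeta5) (hw : w ∈ Zzeta5) :
    sigma2 (z - w) = sigma2 z - sigma2 w := by
  have h : z - w = z + ((-1 : ℤ) : ℂ) * w := by push_cast; ring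
  rw [h, sigma2_add hz (mem_zsmul hw (-1)), sigma2_zsmul hw]
  push_cast
  ring

lemma amod_sub {z w : ℂ} (hz : z ∈ Zzeta5) (hw : w ∈ Zzeta5) :
    amod (z - w) = amod z - amod w := by
  have h : z - w = z + ((-1 : ℤ) : ℂ) * w := by push_cast; ring
  rw [h, amod_add hz (mem_zsmul hw (-1)), amod_zsmul hw]
  push_cast
  ring

/-! #### Trigonometric values -/

lemma zeta5_pow_k (k : ℕ) (θ : ℝ) (hθ : θ = k * (2*π/5)) :
    zeta5 ^ k = Complex.ofReal (Real.cos θ) + Complex.ofReal (Real.sin θ) * Complex.I := by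
  have h1 : zeta5 ^ k = Complex.exp (((θ : ℝ) : ℂ) * Complex.I) := by
    rw [zeta5, ← Complex.exp_nat_mul, hθ]
    congr 1
    push_cast
    ring
  rw [h1, Complex.exp_mul_I]
  rw [← Complex.ofReal_cos, ← Complex.ofReal_sin]

def bR : ℝ := 2 * Real.cos (2*π/5)
def sR : ℝ := 2 * Real.sin (2*π/5)
def tR : ℝ := -(2 * Real.cos (4*π/5))

lemma beta_c : ((bR : ℝ) : ℂ) = zeta5 + zeta5 ^ 4 := by
  rw [zeta5_pow_k 4 (2*π - 2*π/5) (by push_cast; ring),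
    show zeta5 = zeta5 ^ 1 by ring, zeta5_pow_k 1 (2*π/5) (by push_cast; ring),
    Real.cos_two_pi_sub, Real.sin_two_pi_sub, bR]
  push_cast
  ring

lemma gamma_c : zeta5 - zeta5 ^ 4 = Complex.I * ((sR : ℝ) : ℂ) := by
  rw [zeta5_pow_k 4 (2*π - 2*π/5) (by push_cast; ring),
    show zeta5 = zeta5 ^ 1 by ring, zeta5_pow_k 1 (2*π/5) (by push_cast; ring),
    Real.cos_two_pi_sub, Real.sin_two_pi_sub, sR]
  push_cast
  ring

lemma T_c : ((tR : ℝ) : ℂ) = -(zeta5 ^ 2) - zeta5 ^ 3 := by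
  rw [zeta5_pow_k 3 (2*π - 4*π/5) (by push_cast; ring),
    zeta5_pow_k 2 (4*π/5) (by push_cast; ring),
    Real.cos_two_pi_sub, Real.sin_two_pi_sub, tR]
  push_cast
  ring

lemma bR_pos : 0 < bR := by
  have : 0 < Real.cos (2*π/5) := by
    apply Real.cos_pos_of_mem_Ioo
    constructor <;> [linarith [pi_pos]; linarith [pi_pos]]
  simp [bR]; linarith

lemma bR_lt_one : bR < 1 := by
  have h := Real.cos_lt_cos_of_nonneg_of_le_pi (by positivity : (0:ℝ) ≤ π/3)
    (by linarith [pi_pos] : 2*π/5 ≤ π) (by linarith [pi_pos] : π/3 < 2*π/5)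
  rw [Real.cos_pi_div_three] at h
  simp only [bR]
  linarith

lemma sR_pos : 0 < sR := by
  have : 0 < Real.sin (2*π/5) := Real.sin_pos_of_pos_of_lt_pi (by positivity) (by linarith [pi_pos])
  simp [sR]; linarith

lemma tR_pos : 0 < tR := by
  have : Real.cos (4*π/5) < 0 :=
    Real.cos_neg_of_pi_div_two_lt_of_lt (by linarith [pi_pos]) (by linarith [pi_pos])
  simp [tR]; linarith

lemma bR_sq : bR ^ 2 = 1 - bR := by
  have hc : ((bR ^ 2 : ℝ) : ℂ) = ((1 - bR : ℝ) : ℂ) := by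
    push_cast
    rw [beta_c]
    linear_combination (zeta5 ^ 3 + 2) * zeta5_pow_five + zeta5_sum
  exact_mod_cast hc

/-! #### The special elements X and Y -/

def Xel : ℂ := zeta5 ^ 3 + zeta5 ^ 2
def Yel : ℂ := zeta5 ^ 3 - zeta5 ^ 2

lemma Xel_mem : Xel ∈ Zzeta5 := mem_add (mem_zeta_pow 3 (by norm_num)) (mem_zeta_pow 2 (by norm_num))
lemma Yel_mem : Yel ∈ Zzeta5 := mem_sub (mem_zeta_pow 3 (by norm_num)) (mem_zeta_pow 2 (by norm_num))

lemma sigma2_Xel : sigma2 Xel = ((bR : ℝ) : ℂ) := by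
  rw [Xel, sigma2_add (mem_zeta_pow 3 (by norm_num)) (mem_zeta_pow 2 (by norm_num)),
    sigma2_zeta_pow 3 (by norm_num), sigma2_zeta_pow 2 (by norm_num), beta_c]
  norm_num
  linear_combination zeta5 * zeta5_pow_five

lemma sigma2_Yel : sigma2 Yel = Complex.I * ((sR : ℝ) : ℂ) := by
  rw [Yel, sigma2_sub (mem_zeta_pow 3 (by norm_num)) (mem_zeta_pow 2 (by norm_num)),
    sigma2_zeta_pow 3 (by norm_num), sigma2_zeta_pow 2 (by norm_num), ← gamma_c]
  norm_num
  linear_combination zeta5 * zeta5_pow_five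

lemma Xel_real : Xel = ((-tR : ℝ) : ℂ) := by
  rw [Xel]
  push_cast
  rw [T_c]
  ring

lemma norm_Xel : ‖Xel‖ = tR := by
  rw [Xel_real, Complex.norm_real, Real.norm_eq_abs, abs_of_neg (by linarith [tR_pos])]
  ring

/-! #### Density -/

lemma bR_pow_rep (n : ℕ) : ∃ a b : ℤ, bR ^ n = a + b * bR := by
  induction n with
  | zero => exact ⟨1, 0, by norm_num⟩
  | succ n ih =>
    obtain ⟨a, b, h⟩ := ih
    refine ⟨b, a - b, ?_⟩
    rw [pow_succ, h]
    have hbb : bR * bR = 1 - bR := by nlinarith [bR_sq]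
    push_cast
    linear_combination (b : ℝ) * hbb

lemma real_approx (x ε : ℝ) (hε : 0 < ε) : ∃ a b : ℤ, |x - (a + b * bR)| < ε := by
  obtain ⟨n, hn⟩ := exists_pow_lt_of_lt_one hε bR_lt_one
  have hgpos : 0 < bR ^ n := pow_pos bR_pos n
  have h1 : (⌊x / bR ^ n⌋ : ℝ) * bR ^ n ≤ x :=
    (le_div_iff₀ hgpos).mp (Int.floor_le _)
  have h2 : x < ((⌊x / bR ^ n⌋ : ℝ) + 1) * bR ^ n := by
    rw [← div_lt_iff₀ hgpos]
    exact Int.lt_floor_add_one _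
  obtain ⟨a, b, hab⟩ := bR_pow_rep n
  refine ⟨⌊x / bR ^ n⌋ * a, ⌊x / bR ^ n⌋ * b, ?_⟩
  have hEq : (⌊x / bR ^ n⌋ : ℝ) * bR ^ n
      = ((⌊x / bR ^ n⌋ * a : ℤ) : ℝ) + ((⌊x / bR ^ n⌋ * b : ℤ) : ℝ) * bR := by
    push_cast
    rw [hab]
    ring
  rw [← hEq, abs_sub_lt_iff]
  constructor <;> nlinarith

lemma complex_approx (x : ℂ) (ε : ℝ) (hε : 0 < ε) :
    ∃ a b c e : ℤ, ‖(x - (((a + b * bR : ℝ) : ℂ) + ((c + e * bR : ℝ) : ℂ) * (Complex.I * ((sR:ℝ):ℂ))))‖ < ε := by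
  obtain ⟨a, b, hab⟩ := real_approx x.re (ε/2) (by linarith)
  obtain ⟨c, e, hce⟩ := real_approx (x.im / sR) (ε/(2*sR)) (div_pos hε (by linarith [sR_pos]))
  refine ⟨a, b, c, e, ?_⟩
  set g1 : ℝ := a + b * bR
  set g2 : ℝ := c + e * bR
  have hx : x - (((g1:ℝ):ℂ) + ((g2:ℝ):ℂ) * (Complex.I * ((sR:ℝ):ℂ)))
      = Complex.ofReal (x.re - g1) + Complex.ofReal (x.im - g2 * sR) * Complex.I := by
    conv_lhs => rw [← Complex.re_add_im x]
    push_cast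
    ring
  rw [hx]
  have h1 : ‖(Complex.ofReal (x.re - g1) + Complex.ofReal (x.im - g2 * sR) * Complex.I)‖
      ≤ |x.re - g1| + |x.im - g2 * sR| := by
    apply (Complex.norm_le_abs_re_add_abs_im _).trans
    simp [Complex.add_re, Complex.add_im, Complex.ofReal_re, Complex.ofReal_im,
      Complex.mul_re, Complex.mul_im, Complex.I_re, Complex.I_im]
  have h2 : |x.im - g2 * sR| < ε / 2 := by
    have : x.im - g2 * sR = (x.im / sR - g2) * sR := by
      rw [sub_mul, div_mul_cancel₀ _ (ne_of_gt sR_pos)]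
    rw [this, abs_mul, abs_of_pos sR_pos]
    calc |x.im / sR - g2| * sR < (ε / (2*sR)) * sR := by
          apply mul_lt_mul_of_pos_right hce sR_pos
      _ = ε / 2 := by
          field_simp [ne_of_gt sR_pos]
  linarith

lemma pent_interior_nonempty : (interior pent).Nonempty := by
  rw [pent]
  rw [(convex_convexHull ℝ _).interior_nonempty_iff_affineSpan_eq_top, affineSpan_convexHull]
  have hne : ({z : ℂ | z ^ 5 = 1}).Nonempty := ⟨1, by norm_num⟩
  rw [AffineSubspace.affineSpan_eq_top_iff_vectorSpan_eq_top_of_nonempty ℝ ℂ ℂ hne]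
  rw [eq_top_iff]
  intro x _
  have h1 : (1:ℂ) ∈ {z : ℂ | z ^ 5 = 1} := by norm_num
  have hz : zeta5 ∈ {z : ℂ | z ^ 5 = 1} := zeta5_pow_five
  have hz4 : zeta5 ^ 4 ∈ {z : ℂ | z ^ 5 = 1} := by
    show (zeta5 ^ 4) ^ 5 = 1
    rw [← pow_mul, show 4*5 = 5*4 by ring, pow_mul, zeta5_pow_five, one_pow]
  have hu : zeta5 - 1 ∈ vectorSpan ℝ {z : ℂ | z ^ 5 = 1} :=
    vsub_mem_vectorSpan ℝ hz h1
  have hv : zeta5 ^ 4 - 1 ∈ vectorSpan ℝ {z : ℂ | z ^ 5 = 1} :=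
    vsub_mem_vectorSpan ℝ hz4 h1
  have hbne : bR - 2 ≠ 0 := by have := bR_lt_one; intro h; nlinarith
  have hsne : sR ≠ 0 := ne_of_gt sR_pos
  have hx : x = (x.re / (bR - 2)) • ((zeta5 - 1) + (zeta5 ^ 4 - 1))
      + (x.im / sR) • ((zeta5 - 1) - (zeta5 ^ 4 - 1)) := by
    have e1 : (zeta5 - 1) + (zeta5 ^ 4 - 1) = (((bR - 2 : ℝ)) : ℂ) := by
      push_cast; rw [beta_c]; ring
    have e2 : (zeta5 - 1) - (zeta5 ^ 4 - 1) = Complex.I * ((sR:ℝ):ℂ) := by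
      rw [← gamma_c]; ring
    rw [e1, e2, Complex.real_smul, Complex.real_smul, ← Complex.ofReal_mul,
      div_mul_cancel₀ _ hbne]
    have e3 : ((x.im / sR : ℝ) : ℂ) * (Complex.I * ((sR:ℝ):ℂ)) = ((x.im:ℝ):ℂ) * Complex.I := by
      rw [mul_comm Complex.I, ← mul_assoc, ← Complex.ofReal_mul, div_mul_cancel₀ _ hsne]
    rw [e3]
    exact (Complex.re_add_im x).symm
  rw [hx]
  exact Submodule.add_mem _ (Submodule.smul_mem _ _ (Submodule.add_mem _ hu hv))
    (Submodule.smul_mem _ _ (Submodule.sub_mem _ hu hv))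

lemma exists_z0 (target : ℂ) (ε : ℝ) (hε : 0 < ε) :
    ∃ z0 ∈ Zzeta5, amod z0 = 1 ∧ ‖sigma2 z0 - target‖ < ε := by
  obtain ⟨a, b, c, e, h⟩ := complex_approx ((target - 1)/5) (ε/5) (by linarith)
  set W : ℂ := (((a : ℤ) : ℂ) + ((b : ℤ) : ℂ) * Xel) + ((((c : ℤ) : ℂ)) + ((e : ℤ) : ℂ) * Xel) * Yel with hW
  have hW1 : (((a : ℤ) : ℂ) + ((b : ℤ) : ℂ) * Xel) ∈ Zzeta5 :=
    mem_add (mem_int a) (mem_zsmul Xel_mem b)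
  have hW2 : ((((c : ℤ) : ℂ)) + ((e : ℤ) : ℂ) * Xel) ∈ Zzeta5 :=
    mem_add (mem_int c) (mem_zsmul Xel_mem e)
  have hWmem : W ∈ Zzeta5 := mem_add hW1 (mem_mul hW2 Yel_mem)
  have hsW : sigma2 W = (((a : ℝ) + (b : ℝ) * bR : ℝ) : ℂ)
      + (((c : ℝ) + (e : ℝ) * bR : ℝ) : ℂ) * (Complex.I * ((sR:ℝ):ℂ)) := by
    rw [hW, sigma2_add hW1 (mem_mul hW2 Yel_mem), sigma2_mul hW2 Yel_mem,
      sigma2_add (mem_int a) (mem_zsmul Xel_mem b), sigma2_zsmul Xel_mem,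
      sigma2_add (mem_int c) (mem_zsmul Xel_mem e), sigma2_zsmul Xel_mem,
      sigma2_int, sigma2_int, sigma2_Xel, sigma2_Yel]
    push_cast
    ring
  refine ⟨1 + ((5 : ℤ) : ℂ) * W, mem_add mem_one (mem_zsmul hWmem 5), ?_, ?_⟩
  · rw [amod_add mem_one (mem_zsmul hWmem 5), amod_zsmul hWmem, amod_one,
      show ((5:ℤ) : ZMod 5) = 0 by decide, zero_mul, add_zero]
  · rw [sigma2_add mem_one (mem_zsmul hWmem 5), sigma2_zsmul hWmem, sigma2_one, hsW]
    have key : (1 : ℂ) + ((5:ℤ):ℂ) * ((((a : ℝ) + (b : ℝ) * bR : ℝ) : ℂ)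
        + (((c : ℝ) + (e : ℝ) * bR : ℝ) : ℂ) * (Complex.I * ((sR:ℝ):ℂ))) - target
        = -(5 * ((target - 1)/5 - ((((a : ℝ) + (b : ℝ) * bR : ℝ) : ℂ)
          + (((c : ℝ) + (e : ℝ) * bR : ℝ) : ℂ) * (Complex.I * ((sR:ℝ):ℂ))))) := by
      push_cast
      ring
    rw [key, norm_neg]
    have : ‖(5 : ℂ) * ((target - 1)/5 - ((((a : ℝ) + (b : ℝ) * bR : ℝ) : ℂ)
        + (((c : ℝ) + (e : ℝ) * bR : ℝ) : ℂ) * (Complex.I * ((sR:ℝ):ℂ))))‖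
        = 5 * ‖(target - 1)/5 - ((((a : ℝ) + (b : ℝ) * bR : ℝ) : ℂ)
        + (((c : ℝ) + (e : ℝ) * bR : ℝ) : ℂ) * (Complex.I * ((sR:ℝ):ℂ)))‖ := by
      rw [norm_mul]
      norm_num
    rw [this]
    have h5 : ‖(target - 1)/5 - ((((a : ℝ) + (b : ℝ) * bR : ℝ) : ℂ)
        + (((c : ℝ) + (e : ℝ) * bR : ℝ) : ℂ) * (Complex.I * ((sR:ℝ):ℂ)))‖ < ε/5 := by
      have := h
      convert h using 3 <;> push_cast <;> ring
    linarith

/-! #### Switching components -/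

def ptf {d : ℕ} (w : Fin d → ℂ) (z0 : ℂ) (S : Finset (Fin d)) : ℂ := z0 + ∑ i ∈ S, w i

def Ev (d : ℕ) : Finset (Finset (Fin d)) := Finset.univ.filter fun S => Even S.card
def Od (d : ℕ) : Finset (Finset (Fin d)) := Finset.univ.filter fun S => Odd S.card

lemma parity_erase_inj {d : ℕ} (P : ℕ → Prop) (hP : ∀ n, P (n + 1) ↔ ¬ P n) (l : Fin d)
    {S T : Finset (Fin d)} (hS : P S.card) (hT : P T.card)
    (h : S.erase l = T.erase l) : S = T := by
  classical
  by_cases hlS : l ∈ S <;> by_cases hlT : l ∈ T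
  · rw [← Finset.insert_erase hlS, ← Finset.insert_erase hlT, h]
  · exfalso
    rw [← Finset.insert_erase hlS] at hS
    rw [Finset.card_insert_of_notMem (Finset.notMem_erase _ _)] at hS
    rw [← Finset.erase_eq_of_notMem hlT, ← h] at hT
    exact (hP _).mp hS hT
  · exfalso
    rw [← Finset.insert_erase hlT] at hT
    rw [Finset.card_insert_of_notMem (Finset.notMem_erase _ _)] at hT
    rw [← Finset.erase_eq_of_notMem hlS, h] at hS
    exact (hP _).mp hT hS
  · rw [← Finset.erase_eq_of_notMem hlS, ← Finset.erase_eq_of_notMem hlT, h]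

lemma parity_card_le {d : ℕ} (hd : 1 ≤ d) (P : ℕ → Prop)
    [DecidablePred fun S : Finset (Fin d) => P S.card]
    (hP : ∀ n, P (n + 1) ↔ ¬ P n) :
    (Finset.univ.filter fun S : Finset (Fin d) => P S.card).card ≤ 2 ^ (d - 1) := by
  classical
  set l : Fin d := ⟨0, hd⟩
  calc (Finset.univ.filter fun S : Finset (Fin d) => P S.card).card
      ≤ ((Finset.univ.erase l).powerset).card := by
        apply Finset.card_le_card_of_injOn (fun S : Finset (Fin d) => S.erase l)
        · intro S hS
          rw [Finset.mem_coe, Finset.mem_powerset]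
          exact Finset.erase_subset_erase _ (Finset.subset_univ S)
        · intro S hS T hT h
          rw [Finset.mem_coe, Finset.mem_filter] at hS hT
          exact parity_erase_inj P hP l hS.2 hT.2 h
    _ = 2 ^ (d - 1) := by
        rw [Finset.card_powerset, Finset.card_erase_of_mem (Finset.mem_univ _), Finset.card_univ,
          Fintype.card_fin]

lemma switch_card_eq {d : ℕ} (w : Fin d → ℂ) (z0 : ℂ) (i : Fin d) (L : Set ℂ)
    (hL : ∀ x : ℂ, x ∈ L ↔ x + w i ∈ L) [DecidablePred (· ∈ L)] :
    ((Ev d).filter fun S => ptf w z0 S ∈ L).card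
      = ((Od d).filter fun S => ptf w z0 S ∈ L).card := by
  classical
  have hpt_erase : ∀ S : Finset (Fin d), i ∈ S → ptf w z0 (S.erase i) + w i = ptf w z0 S := by
    intro S hi
    rw [ptf, ptf, add_assoc, Finset.sum_erase_add _ _ hi]
  have hpt_insert : ∀ S : Finset (Fin d), i ∉ S → ptf w z0 (insert i S) = ptf w z0 S + w i := by
    intro S hi
    rw [ptf, ptf, Finset.sum_insert hi]
    ring
  refine Finset.card_bij' (fun S _ => if i ∈ S then S.erase i else insert i S)
    (fun S _ => if i ∈ S then S.erase i else insert i S) ?_ ?_ ?_ ?_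
  · intro S hS
    beta_reduce
    rw [Finset.mem_filter, Ev, Finset.mem_filter] at hS
    obtain ⟨⟨-, hev⟩, hmem⟩ := hS
    rw [Finset.mem_filter, Od, Finset.mem_filter]
    by_cases hi : i ∈ S
    · rw [if_pos hi]
      refine ⟨⟨Finset.mem_univ _, ?_⟩, ?_⟩
      · rw [Finset.card_erase_of_mem hi]
        have h1 : 1 ≤ S.card := Finset.card_pos.mpr ⟨i, hi⟩
        rw [Nat.odd_iff]
        rw [Nat.even_iff] at hev
        omega
      · rw [hL]
        rw [hpt_erase S hi]
        exact hmem
    · rw [if_neg hi]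
      refine ⟨⟨Finset.mem_univ _, ?_⟩, ?_⟩
      · rw [Finset.card_insert_of_notMem hi]
        exact Even.add_one hev
      · rw [hpt_insert S hi, ← hL]
        exact hmem
  · intro S hS
    beta_reduce
    rw [Finset.mem_filter, Od, Finset.mem_filter] at hS
    obtain ⟨⟨-, hod⟩, hmem⟩ := hS
    rw [Finset.mem_filter, Ev, Finset.mem_filter]
    by_cases hi : i ∈ S
    · rw [if_pos hi]
      refine ⟨⟨Finset.mem_univ _, ?_⟩, ?_⟩
      · rw [Finset.card_erase_of_mem hi]
        have h1 : 1 ≤ S.card := Finset.card_pos.mpr ⟨i, hi⟩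
        rw [Nat.even_iff]
        rw [Nat.odd_iff] at hod
        omega
      · rw [hL, hpt_erase S hi]
        exact hmem
    · rw [if_neg hi]
      refine ⟨⟨Finset.mem_univ _, ?_⟩, ?_⟩
      · rw [Finset.card_insert_of_notMem hi]
        exact hod.add_one
      · rw [hpt_insert S hi, ← hL]
        exact hmem
  · intro S hS
    beta_reduce
    by_cases hi : i ∈ S
    · rw [if_pos hi, if_neg (Finset.notMem_erase _ _), Finset.insert_erase hi]
    · rw [if_neg hi, if_pos (Finset.mem_insert_self _ _), Finset.erase_insert hi]
  · intro S hS
    beta_reduce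
    by_cases hi : i ∈ S
    · rw [if_pos hi, if_neg (Finset.notMem_erase _ _), Finset.insert_erase hi]
    · rw [if_neg hi, if_pos (Finset.mem_insert_self _ _), Finset.erase_insert hi]

lemma sums_distinct {d : ℕ} (w : Fin d → ℂ)
    (hdom : ∀ i : Fin d, ∑ j ∈ Finset.univ.filter (fun j => j < i), ‖w j‖ < ‖w i‖) :
    ∀ S T : Finset (Fin d), ∑ i ∈ S, w i = ∑ i ∈ T, w i → S = T := by
  classical
  intro S T h
  by_contra hne
  have hdiff : ∑ i ∈ S \ T, w i = ∑ i ∈ T \ S, w i := by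
    have hS : ∑ i ∈ S \ T, w i + ∑ i ∈ S ∩ T, w i = ∑ i ∈ S, w i := by
      rw [← Finset.sdiff_inter_self_left S T]
      exact Finset.sum_sdiff Finset.inter_subset_left
    have hT : ∑ i ∈ T \ S, w i + ∑ i ∈ T ∩ S, w i = ∑ i ∈ T, w i := by
      rw [← Finset.sdiff_inter_self_left T S]
      exact Finset.sum_sdiff Finset.inter_subset_left
    rw [← hS, ← hT, Finset.inter_comm T S] at h
    exact add_right_cancel h
  have hne2 : ((S \ T) ∪ (T \ S)).Nonempty := by
    rw [Finset.nonempty_iff_ne_empty]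
    intro hemp
    apply hne
    rw [Finset.union_eq_empty, Finset.sdiff_eq_empty_iff_subset,
      Finset.sdiff_eq_empty_iff_subset] at hemp
    exact Finset.Subset.antisymm hemp.1 hemp.2
  have hmem : ((S \ T) ∪ (T \ S)).max' hne2 ∈ (S \ T) ∪ (T \ S) := Finset.max'_mem _ hne2
  have hle : ∀ j ∈ (S \ T) ∪ (T \ S), j ≤ ((S \ T) ∪ (T \ S)).max' hne2 :=
    fun j hj => Finset.le_max' _ _ hj
  have main : ∀ A B : Finset (Fin d), Disjoint A B →
      (∑ i ∈ A, w i = ∑ i ∈ B, w i) → ∀ m : Fin d, m ∈ A →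
      (∀ j ∈ A ∪ B, j ≤ m) → False := by
    intro A B hdisj hsum m hmax hmle
    have hA : ∑ i ∈ A, w i = w m + ∑ i ∈ A.erase m, w i := by
      rw [Finset.add_sum_erase _ _ hmax]
    have h2 : w m = ∑ i ∈ B, w i - ∑ i ∈ A.erase m, w i := by
      rw [← hsum, hA]; ring
    have hsub : (A.erase m) ∪ B ⊆ (Finset.univ.filter (fun j => j < m)) := by
      intro j hj
      rw [Finset.mem_filter]
      refine ⟨Finset.mem_univ _, ?_⟩
      rcases Finset.mem_union.mp hj with hj1 | hj2
      · have hjm : j ≠ m := Finset.ne_of_mem_erase hj1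
        have : j ∈ A ∪ B := Finset.mem_union_left _ (Finset.mem_of_mem_erase hj1)
        exact lt_of_le_of_ne (hmle _ this) hjm
      · have hjm : j ≠ m := by
          intro hjeq
          exact (Finset.disjoint_left.mp hdisj hmax) (hjeq ▸ hj2)
        have : j ∈ A ∪ B := Finset.mem_union_right _ hj2
        exact lt_of_le_of_ne (hmle _ this) hjm
    have hdisj2 : Disjoint (A.erase m) B :=
      Finset.disjoint_of_subset_left (Finset.erase_subset _ _) hdisj
    have hbound : ‖w m‖ ≤ ∑ j ∈ (A.erase m) ∪ B, ‖w j‖ := by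
      rw [h2]
      apply (norm_sub_le _ _).trans
      have n1 : ‖∑ i ∈ B, w i‖ ≤ ∑ i ∈ B, ‖w i‖ := norm_sum_le _ _
      have n2 : ‖∑ i ∈ A.erase m, w i‖ ≤ ∑ i ∈ A.erase m, ‖w i‖ := norm_sum_le _ _
      rw [Finset.sum_union hdisj2]
      linarith
    have hbound2 : ∑ j ∈ (A.erase m) ∪ B, ‖w j‖
        ≤ ∑ j ∈ Finset.univ.filter (fun j => j < m), ‖w j‖ :=
      Finset.sum_le_sum_of_subset_of_nonneg hsub (fun _ _ _ => norm_nonneg _)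
    have := hdom m
    linarith
  have hdisjST : Disjoint (S \ T) (T \ S) := disjoint_sdiff_sdiff
  rcases Finset.mem_union.mp hmem with hc | hc
  · exact main (S \ T) (T \ S) hdisjST hdiff _ hc hle
  · refine main (T \ S) (S \ T) hdisjST.symm hdiff.symm _ hc ?_
    intro j hj
    exact hle j (by rwa [Finset.union_comm])

lemma exists_multipliers {d : ℕ} (v : Fin d → ℂ) (hv : ∀ i, v i ≠ 0) :
    ∃ M : Fin d → ℕ, (∀ i, 1 ≤ M i) ∧
      ∀ i : Fin d, ∑ j ∈ Finset.univ.filter (fun j => j < i), (M j : ℝ) * ‖v j‖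
        < (M i : ℝ) * ‖v i‖ := by
  classical
  rcases Nat.eq_zero_or_pos d with hd | hd
  · subst hd
    exact ⟨fun i => 1, fun i => le_refl _, fun i => absurd i.2 (by omega)⟩
  have hnu : (Finset.univ : Finset (Fin d)).Nonempty := by
    rw [Finset.univ_nonempty_iff]
    exact Fin.pos_iff_nonempty.mp hd
  set mx : ℝ := Finset.univ.sup' hnu (fun i => ‖v i‖) with hmx
  set mn : ℝ := Finset.univ.inf' hnu (fun i => ‖v i‖) with hmn
  have hmn_pos : 0 < mn := by
    rw [hmn, Finset.lt_inf'_iff]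
    intro i _
    exact norm_pos_iff.mpr (hv i)
  obtain ⟨i1⟩ : Nonempty (Fin d) := Fin.pos_iff_nonempty.mp hd
  have hmx_mn : mn ≤ mx :=
    le_trans (Finset.inf'_le _ (Finset.mem_univ i1))
      (Finset.le_sup' (fun i => ‖v i‖) (Finset.mem_univ i1))
  have hmx_nonneg : 0 ≤ mx := le_trans hmn_pos.le hmx_mn
  obtain ⟨K0, hK0⟩ := exists_nat_gt (mx / mn)
  set K := K0 + 2 with hK
  have hKmn : mx < (K - 1 : ℝ) * mn := by
    have h1 : mx / mn < K0 := hK0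
    have h2 : mx < K0 * mn := by
      rw [div_lt_iff₀ hmn_pos] at h1
      linarith
    have : (K0 : ℝ) ≤ (K - 1 : ℝ) := by
      rw [hK]; push_cast; linarith
    nlinarith
  refine ⟨fun i => K ^ (i : ℕ), fun i => Nat.one_le_pow _ _ (by omega), ?_⟩
  intro i
  have hKgt1 : (1 : ℝ) < (K : ℝ) := by rw [hK]; push_cast; linarith [Nat.cast_nonneg (α := ℝ) K0]
  show ∑ j ∈ Finset.univ.filter (fun j => j < i), ((K ^ (j : ℕ) : ℕ) : ℝ) * ‖v j‖
      < ((K ^ (i : ℕ) : ℕ) : ℝ) * ‖v i‖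
  rw [Nat.cast_pow]
  calc ∑ j ∈ Finset.univ.filter (fun j => j < i), ((K ^ (j : ℕ) : ℕ) : ℝ) * ‖v j‖
      ≤ ∑ j ∈ Finset.univ.filter (fun j => j < i), ((K : ℝ) ^ (j : ℕ)) * mx := by
        apply Finset.sum_le_sum
        intro j _
        push_cast
        apply mul_le_mul_of_nonneg_left _ (by positivity)
        exact Finset.le_sup' (fun i => ‖v i‖) (Finset.mem_univ j)
    _ = mx * ∑ j ∈ Finset.univ.filter (fun j => j < i), ((K : ℝ) ^ (j : ℕ)) := by
        rw [Finset.mul_sum]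
        exact Finset.sum_congr rfl fun j _ => by ring
    _ = mx * ∑ j ∈ Finset.range (i : ℕ), ((K : ℝ) ^ j) := by
        congr 1
        exact Finset.sum_bij'
          (fun (j : Fin d) (_ : j ∈ Finset.univ.filter (fun j => j < i)) => (j : ℕ))
          (fun (m : ℕ) (hm : m ∈ Finset.range (i : ℕ)) =>
            (⟨m, lt_trans (Finset.mem_range.mp hm) i.2⟩ : Fin d))
          (fun j hj => Finset.mem_range.mpr (Finset.mem_filter.mp hj).2)
          (fun m hm => Finset.mem_filter.mpr ⟨Finset.mem_univ _, Finset.mem_range.mp hm⟩)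
          (fun j hj => rfl) (fun m hm => rfl) (fun j hj => rfl)
    _ < (K : ℝ) ^ (i : ℕ) * ‖v i‖ := ?_
  · have hgeom : ∑ j ∈ Finset.range (i : ℕ), ((K : ℝ) ^ j)
        = ((K : ℝ) ^ (i : ℕ) - 1) / ((K : ℝ) - 1) :=
      geom_sum_eq (by linarith) _
    rw [hgeom]
    have hK1 : (0 : ℝ) < (K : ℝ) - 1 := by linarith
    have hKpow : (1 : ℝ) ≤ (K : ℝ) ^ (i : ℕ) := one_le_pow₀ (by linarith)
    have hvi : mn ≤ ‖v i‖ := Finset.inf'_le _ (Finset.mem_univ i)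
    have step1 : mx * (((K : ℝ) ^ (i : ℕ) - 1) / ((K : ℝ) - 1)) < (K : ℝ) ^ (i : ℕ) * mn := by
      rw [mul_div_assoc', div_lt_iff₀ hK1]
      have h3 : mx * ((K:ℝ)^(i:ℕ) - 1) ≤ mx * (K:ℝ)^(i:ℕ) := by nlinarith
      have h4 : mx * (K:ℝ)^(i:ℕ) < ((K:ℝ) - 1) * mn * (K:ℝ)^(i:ℕ) := by
        apply mul_lt_mul_of_pos_right hKmn (by positivity)
      nlinarith
    have step2 : (K : ℝ) ^ (i : ℕ) * mn ≤ (K : ℝ) ^ (i : ℕ) * ‖v i‖ :=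
      mul_le_mul_of_nonneg_left hvi (by positivity)
    linarith

/-! #### Geometry of lines and windows -/

lemma mem_line_iff_translate (u t p x : ℂ) : (t + x) ∈ line u p ↔ x ∈ line u (p - t) := by
  constructor
  · rintro ⟨s, hs⟩
    refine ⟨s, ?_⟩
    rw [Complex.real_smul] at hs ⊢
    linear_combination hs
  · rintro ⟨s, hs⟩
    refine ⟨s, ?_⟩
    rw [Complex.real_smul] at hs ⊢
    linear_combination hs

lemma inter_image_translate (t : ℂ) (A : Set ℂ) (u p : ℂ) :
    ((fun z => t + z) '' A) ∩ line u p = (fun z => t + z) '' (A ∩ line u (p - t)) := by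
  ext x
  constructor
  · rintro ⟨⟨y, hy, rfl⟩, hline⟩
    exact ⟨y, ⟨hy, (mem_line_iff_translate u t p y).mp hline⟩, rfl⟩
  · rintro ⟨y, ⟨hy, hline⟩, rfl⟩
    exact ⟨⟨y, hy, rfl⟩, (mem_line_iff_translate u t p y).mpr hline⟩

lemma Xray_translate (u t p : ℂ) (A : Set ℂ) :
    Xray u ((fun z => t + z) '' A) p = Xray u A (p - t) := by
  rw [Xray, Xray, inter_image_translate]
  exact Set.ncard_image_of_injective _ (add_right_injective t)

lemma mem_WPu_of (u x : ℂ) (hx : x - u ∈ pent) : ((x, (1 : ZMod 5)) : ℂ × ZMod 5) ∈ WPu u := by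
  refine ⟨(x - u, 1), ?_, ?_⟩
  · rw [WP]
    left; left; left
    exact ⟨hx, rfl⟩
  · simp

end Aux

theorem bounded_card_not_determined_by_log_xrays (Λ : Set ℂ) (hΛ : IsPMS Λ) (k : ℕ)
    (hk : 1 ≤ k) (U : Finset ℂ) (hcard : U.card = 1 + Nat.log 2 k)
    (hUdir : ∀ u ∈ U, ‖u‖ = 1 ∧ IsZ5Direction u)
    (hUpar : (U : Set ℂ).Pairwise fun u v => ¬ Par u v) :
    ∃ F F' : Set ℂ, F ⊆ Λ ∧ F.Finite ∧ F.ncard ≤ k ∧ F' ⊆ Λ ∧ F'.Finite ∧ F'.ncard ≤ k ∧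
      F ≠ F' ∧ ∀ u ∈ U, Xray u F = Xray u F' := by
  classical
  obtain ⟨t, u, -, hΛeq⟩ := hΛ
  obtain ⟨q, hq⟩ := pent_interior_nonempty
  obtain ⟨r, hr, hball⟩ := Metric.isOpen_iff.mp isOpen_interior q hq
  obtain ⟨z0, hz0mem, hz0amod, hz0close⟩ := exists_z0 (u + q) (r/2) (by linarith)
  have hd1 : 1 ≤ U.card := by rw [hcard]; omega
  set d := U.card with hdd
  set uF : Fin d → ℂ := fun i => ((U.equivFin.symm i : U) : ℂ) with huF
  have huFU : ∀ i, uF i ∈ U := fun i => (U.equivFin.symm i).2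
  have hdir : ∀ i : Fin d, ∃ z ∈ Zzeta5, z ≠ 0 ∧ ∃ ρ : ℝ, ρ ≠ 0 ∧ z = ρ • uF i := by
    intro i
    obtain ⟨-, z, hz1, hz2, ρ, hρ1, hρ2⟩ := hUdir _ (huFU i)
    exact ⟨z, hz1, hz2, ρ, hρ1, hρ2⟩
  choose v hvmem hvne ρ hρne hveq using hdir
  obtain ⟨M, hM1, hMdom⟩ := exists_multipliers v hvne
  set C : ℝ := ∑ i : Fin d, (5 * (M i : ℝ)) * ‖sigma2 (v i)‖ with hC
  have hC0 : 0 ≤ C := Finset.sum_nonneg fun i _ => by positivity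
  have hC1 : (0:ℝ) < C + 1 := by linarith
  obtain ⟨n, hn⟩ := exists_pow_lt_of_lt_one
    (show (0:ℝ) < (r/2)/(C+1) by positivity) bR_lt_one
  set w : Fin d → ℂ := fun i => ((5 * (M i : ℤ) : ℤ) : ℂ) * (Xel ^ n * v i) with hw
  have hwmem : ∀ i, w i ∈ Zzeta5 := fun i =>
    mem_zsmul (mem_mul (mem_pow Xel_mem n) (hvmem i)) _
  have hwamod : ∀ i, amod (w i) = 0 := by
    intro i
    rw [hw]
    beta_reduce
    rw [amod_zsmul (mem_mul (mem_pow Xel_mem n) (hvmem i))]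
    have h5 : ((5 * (M i : ℤ) : ℤ) : ZMod 5) = 0 := by
      have : ((5 * (M i : ℤ) : ℤ) : ZMod 5) = 5 * ((M i : ℤ) : ZMod 5) := by push_cast; ring
      rw [this, show (5 : ZMod 5) = 0 from rfl, zero_mul]
    rw [h5, zero_mul]
  have hXn : Xel ^ n = (((-tR)^n : ℝ) : ℂ) := by
    rw [Xel_real, ← Complex.ofReal_pow]
  have hsigw : ∀ i, sigma2 (w i)
      = (((5 * (M i : ℝ)) * bR ^ n : ℝ) : ℂ) * sigma2 (v i) := by
    intro i
    rw [hw]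
    beta_reduce
    rw [sigma2_zsmul (mem_mul (mem_pow Xel_mem n) (hvmem i)),
      sigma2_mul (mem_pow Xel_mem n) (hvmem i), sigma2_pow Xel_mem, sigma2_Xel]
    push_cast
    ring
  have hbRn : (0:ℝ) < bR ^ n := pow_pos bR_pos n
  have htRn : (0:ℝ) < tR ^ n := pow_pos tR_pos n
  have hnormsigw : ∀ i, ‖sigma2 (w i)‖ = (5 * (M i : ℝ)) * bR ^ n * ‖sigma2 (v i)‖ := by
    intro i
    rw [hsigw i, norm_mul, Complex.norm_real, Real.norm_eq_abs,
      abs_of_nonneg (by positivity)]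
  have hnormw : ∀ i, ‖w i‖ = (5 * (M i : ℝ)) * tR ^ n * ‖v i‖ := by
    intro i
    rw [hw]
    beta_reduce
    rw [norm_mul, norm_mul, norm_pow, norm_Xel]
    have : ‖((5 * (M i : ℤ) : ℤ) : ℂ)‖ = 5 * (M i : ℝ) := by
      have hc : ((5 * (M i : ℤ) : ℤ) : ℂ) = (((5 * (M i : ℝ)) : ℝ) : ℂ) := by push_cast; ring
      rw [hc, Complex.norm_real, Real.norm_eq_abs, abs_of_nonneg (by positivity)]
    rw [this]
    ring
  have hdomw : ∀ i : Fin d,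
      ∑ j ∈ Finset.univ.filter (fun j => j < i), ‖w j‖ < ‖w i‖ := by
    intro i
    have h := hMdom i
    have he : ∀ j : Fin d, ‖w j‖ = (5 * tR ^ n) * ((M j : ℝ) * ‖v j‖) := by
      intro j; rw [hnormw j]; ring
    rw [he i, Finset.sum_congr rfl fun j _ => he j, ← Finset.mul_sum]
    apply mul_lt_mul_of_pos_left h (by positivity)
  have hinj : ∀ S T : Finset (Fin d), ptf w z0 S = ptf w z0 T → S = T := by
    intro S T h
    rw [ptf, ptf] at h
    exact sums_distinct w hdomw S T (add_left_cancel h)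
  have hsum_bound : ∀ S : Finset (Fin d), ‖sigma2 (∑ i ∈ S, w i)‖ < r/2 := by
    intro S
    rw [sigma2_sum _ _ (fun i _ => hwmem i)]
    calc ‖∑ i ∈ S, sigma2 (w i)‖ ≤ ∑ i ∈ S, ‖sigma2 (w i)‖ := norm_sum_le _ _
      _ ≤ ∑ i : Fin d, ‖sigma2 (w i)‖ :=
          Finset.sum_le_sum_of_subset_of_nonneg (Finset.subset_univ S)
            (fun _ _ _ => norm_nonneg _)
      _ = bR ^ n * C := by
          rw [hC, Finset.mul_sum]
          refine Finset.sum_congr rfl fun i _ => ?_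
          rw [hnormsigw i]
          ring
      _ ≤ bR ^ n * (C + 1) := by nlinarith
      _ < r/2 := by
          have h2 := mul_lt_mul_of_pos_right hn hC1
          rwa [div_mul_cancel₀ _ (ne_of_gt hC1)] at h2
  have hpt_mem : ∀ S : Finset (Fin d), ptf w z0 S ∈ LambdaPu u := by
    intro S
    have hmemS : (∑ i ∈ S, w i) ∈ Zzeta5 := mem_sum _ _ fun i _ => hwmem i
    refine ⟨mem_add hz0mem hmemS, ?_⟩
    have hamod : amod (ptf w z0 S) = 1 := by
      rw [ptf, amod_add hz0mem hmemS, amod_sum _ _ fun i _ => hwmem i, hz0amod,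
        Finset.sum_congr rfl fun i _ => hwamod i]
      simp
    have hsig : ‖sigma2 (ptf w z0 S) - (u + q)‖ < r := by
      rw [ptf, sigma2_add hz0mem hmemS]
      have hre : sigma2 z0 + sigma2 (∑ i ∈ S, w i) - (u + q)
          = (sigma2 z0 - (u + q)) + sigma2 (∑ i ∈ S, w i) := by ring
      calc ‖sigma2 z0 + sigma2 (∑ i ∈ S, w i) - (u + q)‖
          ≤ ‖sigma2 z0 - (u + q)‖ + ‖sigma2 (∑ i ∈ S, w i)‖ := by
            rw [hre]; exact norm_add_le _ _
        _ < r/2 + r/2 := add_lt_add hz0close (hsum_bound S)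
        _ = r := by ring
    rw [starMap_eq, hamod]
    apply mem_WPu_of
    apply interior_subset
    apply hball
    rw [Metric.mem_ball, Complex.dist_eq]
    have hre2 : sigma2 (ptf w z0 S) - u - q = sigma2 (ptf w z0 S) - (u + q) := by ring
    rw [hre2]
    exact hsig
  set F0 : Finset ℂ := (Ev d).image (ptf w z0) with hF0
  set F0' : Finset ℂ := (Od d).image (ptf w z0) with hF0'
  have hmemEv : (∅ : Finset (Fin d)) ∈ Ev d := by
    rw [Ev, Finset.mem_filter]
    exact ⟨Finset.mem_univ _, by simp⟩
  have hsubF0 : (↑F0 : Set ℂ) ⊆ LambdaPu u := by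
    intro x hx
    rw [hF0, Finset.coe_image] at hx
    obtain ⟨S, -, rfl⟩ := hx
    exact hpt_mem S
  have hsubF0' : (↑F0' : Set ℂ) ⊆ LambdaPu u := by
    intro x hx
    rw [hF0', Finset.coe_image] at hx
    obtain ⟨S, -, rfl⟩ := hx
    exact hpt_mem S
  have hklog : 2 ^ (d - 1) ≤ k := by
    have : d - 1 = Nat.log 2 k := by omega
    rw [this]
    exact Nat.pow_log_le_self 2 (by omega)
  refine ⟨(fun z => t + z) '' ↑F0, (fun z => t + z) '' ↑F0', ?_, ?_, ?_, ?_, ?_, ?_, ?_, ?_⟩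
  · rw [hΛeq]
    exact Set.image_mono hsubF0
  · exact Set.Finite.image _ (F0.finite_toSet)
  · rw [Set.ncard_image_of_injective _ (add_right_injective t), Set.ncard_coe_finset]
    calc F0.card ≤ (Ev d).card := Finset.card_image_le
      _ ≤ 2 ^ (d - 1) := parity_card_le hd1 Even (fun n => Nat.even_add_one)
      _ ≤ k := hklog
  · rw [hΛeq]
    exact Set.image_mono hsubF0'
  · exact Set.Finite.image _ (F0'.finite_toSet)
  · rw [Set.ncard_image_of_injective _ (add_right_injective t), Set.ncard_coe_finset]
    calc F0'.card ≤ (Od d).card := Finset.card_image_le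
      _ ≤ 2 ^ (d - 1) := parity_card_le hd1 Odd
          (fun n => by rw [Nat.odd_iff, Nat.odd_iff]; omega)
      _ ≤ k := hklog
  · intro heq
    have h1 : t + ptf w z0 ∅ ∈ (fun z => t + z) '' (↑F0 : Set ℂ) :=
      ⟨ptf w z0 ∅, by
        rw [hF0, Finset.coe_image]
        exact ⟨∅, hmemEv, rfl⟩, rfl⟩
    rw [heq] at h1
    obtain ⟨y, hy, hyeq⟩ := h1
    rw [hF0', Finset.coe_image] at hy
    obtain ⟨S, hS, rfl⟩ := hy
    have : S = ∅ := hinj S ∅ (add_left_cancel hyeq)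
    subst this
    have hSodd : Odd (Finset.card (∅ : Finset (Fin d))) := (Finset.mem_filter.mp hS).2
    simp at hSodd
  · intro u' hu'
    set i : Fin d := U.equivFin ⟨u', hu'⟩ with hi
    have huFi : uF i = u' := by
      rw [huF, hi]
      beta_reduce
      rw [Equiv.symm_apply_apply]
    set c : ℝ := (5 * (M i : ℝ)) * (-tR) ^ n * ρ i with hc
    have hwi : w i = c • u' := by
      rw [hw]
      beta_reduce
      rw [hXn, hveq i, huFi, Complex.real_smul, Complex.real_smul, hc]
      push_cast
      ring
    have hLclosed : ∀ p x : ℂ, x ∈ line u' p ↔ x + w i ∈ line u' p := by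
      intro p x
      rw [hwi]
      constructor
      · rintro ⟨s, rfl⟩
        refine ⟨s + c, ?_⟩
        rw [Complex.real_smul, Complex.real_smul, Complex.real_smul]
        push_cast
        ring
      · rintro ⟨s, hs⟩
        refine ⟨s - c, ?_⟩
        rw [Complex.real_smul, Complex.real_smul] at hs
        rw [Complex.real_smul]
        push_cast at hs ⊢
        linear_combination hs
    funext p
    show ((fun z => t + z) '' (↑F0 : Set ℂ) ∩ line u' p).ncard
        = ((fun z => t + z) '' (↑F0' : Set ℂ) ∩ line u' p).ncard
    have hx1 := Xray_translate u' t p (↑F0 : Set ℂ)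
    have hx2 := Xray_translate u' t p (↑F0' : Set ℂ)
    rw [Xray, Xray] at hx1 hx2
    rw [hx1, hx2]
    set L := line u' (p - t) with hLdef
    have e1 : (↑F0 : Set ℂ) ∩ L
        = ↑(((Ev d).filter fun S => ptf w z0 S ∈ L).image (ptf w z0)) := by
      rw [hF0]
      ext x
      simp only [Finset.coe_image, Set.mem_inter_iff, Set.mem_image, Finset.mem_coe,
        Finset.mem_filter]
      constructor
      · rintro ⟨⟨S, hS, rfl⟩, hx⟩
        exact ⟨S, ⟨hS, hx⟩, rfl⟩
      · rintro ⟨S, ⟨hS, hx⟩, rfl⟩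
        exact ⟨⟨S, hS, rfl⟩, hx⟩
    have e2 : (↑F0' : Set ℂ) ∩ L
        = ↑(((Od d).filter fun S => ptf w z0 S ∈ L).image (ptf w z0)) := by
      rw [hF0']
      ext x
      simp only [Finset.coe_image, Set.mem_inter_iff, Set.mem_image, Finset.mem_coe,
        Finset.mem_filter]
      constructor
      · rintro ⟨⟨S, hS, rfl⟩, hx⟩
        exact ⟨S, ⟨hS, hx⟩, rfl⟩
      · rintro ⟨S, ⟨hS, hx⟩, rfl⟩
        exact ⟨⟨S, hS, rfl⟩, hx⟩
    rw [e1, e2, Set.ncard_coe_finset, Set.ncard_coe_finset,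
      Finset.card_image_of_injOn (fun S _ T _ h => hinj S T h),
      Finset.card_image_of_injOn (fun S _ T _ h => hinj S T h)]
    exact switch_card_eq w z0 i L (hLclosed (p - t))

end
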